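/- A forest consisting of 2q disjoint stars, each with 2p leaves, is an induced subgraph of a caterpillar with 4pq + 4q − 1 vertices and 4pq leaves. -/

import Mathlib

open SimpleGraph

/-- Sets `A`, `B` are complete to each other: disjoint with all edges between them. -/
def Complete {V : Type} (G : SimpleGraph V) (A B : Set V) : Prop :=
  Disjoint A B ∧ ∀ a ∈ A, ∀ b ∈ B, G.Adj a b

/-- Sets `A`, `B` are anticomplete: disjoint with no edges between them. -/
def Anticomplete {V : Type} (G : SimpleGraph V) (A B : Set V) : Prop :=
  Disjoint A B ∧ ∀ a ∈ A, ∀ b ∈ B, ¬ G.Adj a b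

/-- `V1 = N(u) \ N[v]`. -/
def sideA {V : Type} (G : SimpleGraph V) (u v : V) : Set V :=
  G.neighborSet u \ insert v (G.neighborSet v)

/-- `V2 = N(v) \ N[u]`. -/
def sideB {V : Type} (G : SimpleGraph V) (u v : V) : Set V :=
  G.neighborSet v \ insert u (G.neighborSet u)

/-- `V3 = N(u) ∩ N(v)`. -/
def sideC {V : Type} (G : SimpleGraph V) (u v : V) : Set V :=
  G.neighborSet u ∩ G.neighborSet v

/-- The pair `{a, b}` crosses one of the three pairs of sets `(V1,V2)`, `(V2,V3)`, `(V1,V3)`. -/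
def pivotCross {V : Type} (G : SimpleGraph V) (u v a b : V) : Prop :=
  (a ∈ sideA G u v ∧ b ∈ sideB G u v) ∨ (a ∈ sideB G u v ∧ b ∈ sideA G u v) ∨
  (a ∈ sideB G u v ∧ b ∈ sideC G u v) ∨ (a ∈ sideC G u v ∧ b ∈ sideB G u v) ∨
  (a ∈ sideA G u v ∧ b ∈ sideC G u v) ∨ (a ∈ sideC G u v ∧ b ∈ sideA G u v)

lemma pivotCross_comm {V : Type} {G : SimpleGraph V} {u v a b : V} :
    pivotCross G u v a b ↔ pivotCross G u v b a := by
  unfold pivotCross; tauto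

/-- The pivot `G ∧ uv`: complement the edges between each of the pairs `(V1,V2)`, `(V2,V3)`,
`(V1,V3)` and then swap the labels of `u` and `v`. -/
def pivotGraph {V : Type} (G : SimpleGraph V) (u v : V) : SimpleGraph V :=
  letI := Classical.decEq V
  { Adj := fun x y => x ≠ y ∧
      Xor' (G.Adj (Equiv.swap u v x) (Equiv.swap u v y))
        (pivotCross G u v (Equiv.swap u v x) (Equiv.swap u v y)),
    symm := ⟨by
      rintro x y ⟨hxy, h⟩
      refine ⟨hxy.symm, ?_⟩
      have h1 : G.Adj (Equiv.swap u v x) (Equiv.swap u v y) ↔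
          G.Adj (Equiv.swap u v y) (Equiv.swap u v x) := G.adj_comm _ _
      have h2 : pivotCross G u v (Equiv.swap u v x) (Equiv.swap u v y) ↔
          pivotCross G u v (Equiv.swap u v y) (Equiv.swap u v x) := pivotCross_comm
      rw [h1, h2] at h
      exact h⟩,
    loopless := ⟨fun _ h => h.1 rfl⟩ }

/-- `H` is a pivot-minor of `G`: `H` is obtainable from `G` (up to isomorphism) by a sequence of
vertex deletions and pivots of edges. -/
inductive IsPivotMinor : ∀ {W U : Type}, SimpleGraph W → SimpleGraph U → Prop
  | of_iso {W U : Type} {H : SimpleGraph W} {G : SimpleGraph U} :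
      Nonempty (H ≃g G) → IsPivotMinor H G
  | pivot {W U : Type} {H : SimpleGraph W} {G : SimpleGraph U} (u v : U) :
      G.Adj u v → IsPivotMinor H (pivotGraph G u v) → IsPivotMinor H G
  | delete {W U : Type} {H : SimpleGraph W} {G : SimpleGraph U} (s : Set U) :
      IsPivotMinor H (G.induce s) → IsPivotMinor H G

/-- `G` is obtained from `H` by replacing each edge `uv` of `H` with a path whose length satisfies
`P u v h`: there are internally disjoint induced paths of `G` joining the images of the branch
vertices, covering all of `G`, whose edges are exactly the edges of `G`. -/
def IsEdgeReplacement {U W : Type} (H : SimpleGraph U)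
    (P : ∀ u v : U, H.Adj u v → ℕ → Prop) (G : SimpleGraph W) : Prop :=
  ∃ (x : U ↪ W) (p : ∀ u v : U, H.Adj u v → G.Walk (x u) (x v)),
    (∀ u v h, (p u v h).IsPath) ∧
    (∀ u v h, P u v h (p u v h).length) ∧
    (∀ u v h, p v u h.symm = (p u v h).reverse) ∧
    (∀ u v h w, w ∈ (p u v h).support → w ∈ Set.range x → w = x u ∨ w = x v) ∧
    (∀ u v h k l h', s(u, v) ≠ s(k, l) →
      ∀ w, w ∈ (p u v h).support → w ∈ (p k l h').support → w ∈ Set.range x) ∧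
    (∀ w : W, w ∈ Set.range x ∨ ∃ u v h, w ∈ (p u v h).support) ∧
    (∀ a b : W, G.Adj a b ↔ ∃ u v h, (p u v h).toSubgraph.Adj a b)

/-- `G` is obtained from `H` by replacing each edge with a path whose length satisfies `P`. -/
def IsSubdivisionWith {U W : Type} (H : SimpleGraph U) (P : ℕ → Prop) (G : SimpleGraph W) : Prop :=
  IsEdgeReplacement H (fun _ _ _ n => P n) G

/-- An `F`-filleting of `G`: subdivide (at least once) every edge of `G` not in `F`, and do not
subdivide the edges of `F`. -/
def IsFilleting {U W : Type} (G F : SimpleGraph U) (H : SimpleGraph W) : Prop :=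
  IsEdgeReplacement G (fun u v _ n => (F.Adj u v ∧ n = 1) ∨ (¬ F.Adj u v ∧ 2 ≤ n)) H

/-- Join of `H` with a single new vertex (`H + K_1`), the new vertex being `none`. -/
def addApex {W : Type} (H : SimpleGraph W) : SimpleGraph (Option W) :=
  SimpleGraph.fromRel fun a b =>
    a = none ∨ ∃ u v : W, a = some u ∧ b = some v ∧ H.Adj u v

/-- `F` with ends `a`, `b` is a fuzzy odd path (with length satisfying `P`): it consists of an odd
path from `a` to `b` through all the vertices, possibly together with one extra edge `xy` between
two internal vertices such that `xy` lies in a triangle. -/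
def IsFuzzyOddPath {T : Type} (F : SimpleGraph T) (a b : T) (P : ℕ → Prop) : Prop :=
  ∃ p : F.Walk a b, p.IsPath ∧ Odd p.length ∧ P p.length ∧ (∀ t : T, t ∈ p.support) ∧
    ((∀ c d : T, F.Adj c d ↔ p.toSubgraph.Adj c d) ∨
      ∃ x y : T, x ∈ p.support ∧ y ∈ p.support ∧ x ≠ a ∧ x ≠ b ∧ y ≠ a ∧ y ≠ b ∧
        F.Adj x y ∧ ¬ p.toSubgraph.Adj x y ∧ (∃ z : T, F.Adj x z ∧ F.Adj y z) ∧
        (∀ c d : T, F.Adj c d ↔ (p.toSubgraph.Adj c d ∨ (c = x ∧ d = y) ∨ (c = y ∧ d = x))))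

/-- `G` is a proper fuzzy odd subdivision of `H`: `G` is obtained from `H` by replacing each edge
with a fuzzy odd path of (odd) length at least `3`. -/
def IsProperFuzzyOddSubdivision {U W : Type} (H : SimpleGraph U) (G : SimpleGraph W) : Prop :=
  ∃ (x : U ↪ W) (S : ∀ u v : U, H.Adj u v → Set W)
    (hS : ∀ u v h, x u ∈ S u v h ∧ x v ∈ S u v h),
    (∀ u v h, S v u h.symm = S u v h) ∧
    (∀ u v h w, w ∈ S u v h → w ∈ Set.range x → w = x u ∨ w = x v) ∧
    (∀ u v h k l h', s(u, v) ≠ s(k, l) → ∀ w, w ∈ S u v h → w ∈ S k l h' → w ∈ Set.range x) ∧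
    (∀ w : W, w ∈ Set.range x ∨ ∃ u v h, w ∈ S u v h) ∧
    (∀ a b : W, G.Adj a b → ∃ u v h, a ∈ S u v h ∧ b ∈ S u v h) ∧
    (∀ u v h, IsFuzzyOddPath (G.induce (S u v h))
      ⟨x u, (hS u v h).1⟩ ⟨x v, (hS u v h).2⟩ (fun n => 3 ≤ n))

/-- A mass on a graph `G`. -/
structure IsMass {V : Type} (G : SimpleGraph V) (μ : Set V → ℝ) : Prop where
  map_empty : μ ∅ = 0
  map_univ : μ Set.univ = 1
  mono : ∀ ⦃X Y : Set V⦄, X ⊆ Y → μ X ≤ μ Y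
  subadditive : ∀ X Y : Set V, μ (X ∪ Y) ≤ μ X + μ Y

/-- `N^r[v]`: the ball of radius `r` about `v`. -/
def ball {V : Type} (G : SimpleGraph V) (v : V) (r : ℕ) : Set V :=
  {w | ∃ p : G.Walk v w, p.length ≤ r}

/-- `(G, μ)` is `ε`-coherent. -/
def EpsCoherent {V : Type} (G : SimpleGraph V) (μ : Set V → ℝ) (ε : ℝ) : Prop :=
  (∀ v : V, μ {v} < ε) ∧ (∀ v : V, μ (G.neighborSet v) < ε) ∧
  ∀ A B : Set V, Anticomplete G A B → min (μ A) (μ B) < ε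

/-- `(G, μ)` is `(ε, r)`-coherent. -/
def EpsRCoherent {V : Type} (G : SimpleGraph V) (μ : Set V → ℝ) (ε : ℝ) (r : ℕ) : Prop :=
  (∀ v : V, μ (_root_.ball G v r) < ε) ∧
  ∀ A B : Set V, Anticomplete G A B → min (μ A) (μ B) < ε

/-- `(G, μ)` is `(δ, r)`-focused. -/
def Focused {V : Type} (G : SimpleGraph V) (μ : Set V → ℝ) (δ : ℝ) (r : ℕ) : Prop :=
  ∀ Z : Set V, δ ≤ μ Z → ∃ v : Z, μ Z / 2 ≤ μ (Subtype.val '' _root_.ball (G.induce Z) v r)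

/-- `N[X]`. -/
def closedNbhd {V : Type} (G : SimpleGraph V) (X : Set V) : Set V :=
  X ∪ {w | ∃ a ∈ X, G.Adj a w}

/-- `x` is an `r`-centre of `X`: every vertex of `X` is within distance `r` of `x` in `G[X]`. -/
def IsCentre {V : Type} (G : SimpleGraph V) (X : Set V) (x : V) (hx : x ∈ X) (r : ℕ) : Prop :=
  ∀ y : X, ∃ p : (G.induce X).Walk ⟨x, hx⟩ y, p.length ≤ r

/-- A leaf: a vertex of degree at most 1. -/
def IsLeaf {V : Type} (G : SimpleGraph V) (v : V) : Prop := (G.neighborSet v).Subsingleton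

/-- `P` is a path graph. -/
def IsPathGraph {U : Type} (P : SimpleGraph U) : Prop :=
  ∃ (a b : U) (w : P.Walk a b), w.IsPath ∧ (∀ u : U, u ∈ w.support) ∧
    ∀ x y : U, P.Adj x y ↔ w.toSubgraph.Adj x y

/-- A caterpillar: a tree `T` such that `T − L(T)` is a path. -/
def IsCaterpillar {U : Type} (T : SimpleGraph U) : Prop :=
  T.IsTree ∧ IsPathGraph (T.induce {v | ¬ IsLeaf T v})

/-- Disjoint union of `q` stars, each with `p` leaves: `(i, none)` is the centre of the `i`-th
star and `(i, some j)` its leaves. -/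
def starForest (q p : ℕ) : SimpleGraph (Fin q × Option (Fin p)) :=
  SimpleGraph.fromRel fun a b => a.1 = b.1 ∧ a.2 = none ∧ b.2 ≠ none

/-- The clique number `ω(G)`. -/
noncomputable def cliqueNumber {V : Type} [Fintype V] (G : SimpleGraph V) : ℕ :=
  sSup {n | ∃ s : Finset V, G.IsNClique n s}

/-- The independence number `α(G)`. -/
noncomputable def indepNumber {V : Type} [Fintype V] (G : SimpleGraph V) : ℕ :=
  cliqueNumber Gᶜ



/-- A graded graph with unique parents is acyclic. -/
lemma acyclic_of_grading {V : Type} (G : SimpleGraph V) (ρ : V → ℕ)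
    (hgrade : ∀ v w, G.Adj v w → ρ v + 1 = ρ w ∨ ρ w + 1 = ρ v)
    (hpar : ∀ v w w', G.Adj v w → G.Adj v w' → ρ w + 1 = ρ v → ρ w' + 1 = ρ v → w = w') :
    G.IsAcyclic := by
  intro v c hc
  classical
  obtain ⟨u, hu, hmax⟩ := Finset.exists_max_image c.support.toFinset ρ
    ⟨v, by simp [Walk.start_mem_support]⟩
  rw [List.mem_toFinset] at hu
  set c' := c.rotate u hu with hc'def
  have hcyc : c'.IsCycle := hc.rotate hu
  have hmem : ∀ x, x ∈ c'.support → ρ x ≤ ρ u := by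
    intro x hx
    rcases (Walk.mem_support_iff _).mp hx with rfl | hx'
    · exact le_refl _
    · have : x ∈ c.support.tail := (Walk.support_rotate c u hu).mem_iff.mp hx'
      exact hmax x (List.mem_toFinset.mpr (List.mem_of_mem_tail this))
  obtain ⟨w, h1, p, hp⟩ := Walk.not_nil_iff.mp hcyc.not_nil
  have hrev : ¬ c'.reverse.Nil := by
    rw [Walk.not_nil_iff_lt_length, Walk.length_reverse]
    have := hcyc.three_le_length; omega
  obtain ⟨w', h2, p2, hp2⟩ := Walk.not_nil_iff.mp hrev
  -- ρ facts
  have hw : ρ w + 1 = ρ u := by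
    have hwmem : ρ w ≤ ρ u := hmem w (by rw [hp]; simp)
    rcases hgrade u w h1 with h | h
    · omega
    · exact h
  have hw' : ρ w' + 1 = ρ u := by
    have : w' ∈ c'.support := by
      have : w' ∈ c'.reverse.support := by rw [hp2]; simp
      rwa [Walk.support_reverse, List.mem_reverse] at this
    have hwmem : ρ w' ≤ ρ u := hmem w' this
    rcases hgrade u w' h2 with h | h
    · omega
    · exact h
  have hww : w = w' := hpar u w w' h1 h2 hw hw'
  -- edges contradiction
  have e1 : c'.edges = s(u, w) :: p.edges := by rw [hp]; simp
  have e2 : (s(u, w) :: p.edges).reverse = s(u, w') :: p2.edges := by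
    rw [← e1, ← Walk.edges_reverse, hp2]; simp
  have hlen : 3 ≤ (s(u, w) :: p.edges).length := by
    rw [← e1, Walk.length_edges]; exact hcyc.three_le_length
  have hnodup : (s(u, w) :: p.edges).Nodup := e1 ▸ hcyc.edges_nodup
  have hpe : p.edges ≠ [] := by
    intro h; rw [h] at hlen; simp at hlen
  have hmem2 : s(u, w) ∈ p.edges := by
    have h3 : (s(u, w) :: p.edges).getLast? = some s(u, w') := by
      rw [List.getLast?_eq_head?_reverse, e2]; rfl
    obtain ⟨e, es, hes⟩ := List.exists_cons_of_ne_nil hpe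
    rw [hes, List.getLast?_cons_cons] at h3
    have h4 : s(u, w') ∈ (e :: es).getLast? := h3.symm ▸ rfl
    have h5 : s(u, w') ∈ (e :: es) := List.mem_of_mem_getLast? h4
    rw [hes, ← hww] at *
    exact hww ▸ (hes ▸ h5)
  exact (List.nodup_cons.mp hnodup).1 hmem2

lemma connected_of_grading {V : Type} (G : SimpleGraph V) (ρ : V → ℕ) (root : V)
    (hroot : ∀ v, v ≠ root → ∃ w, G.Adj v w ∧ ρ w < ρ v) : G.Connected := by
  have key : ∀ n (v : V), ρ v ≤ n → G.Reachable v root := by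
    intro n
    induction n with
    | zero =>
      intro v hv
      by_cases hvr : v = root
      · exact hvr ▸ Reachable.refl _
      · obtain ⟨w, hadj, hlt⟩ := hroot v hvr; omega
    | succ n ih =>
      intro v hv
      by_cases hvr : v = root
      · exact hvr ▸ Reachable.refl _
      · obtain ⟨w, hadj, hlt⟩ := hroot v hvr
        exact (hadj.reachable).trans (ih w (by omega))
  have : Nonempty V := ⟨root⟩
  exact Connected.mk fun a b => (key (ρ a) a le_rfl).trans (key (ρ b) b le_rfl).symm



lemma toSubgraph_copy {V : Type} {G : SimpleGraph V} {u v u' v' : V}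
    (p : G.Walk u v) (hu : u = u') (hv : v = v') :
    (p.copy hu hv).toSubgraph = p.toSubgraph := by subst hu; subst hv; rfl

/-- Walk along `f k, f (k+1), ..., f (n-1)`. -/
def chainWalk {V : Type} (G : SimpleGraph V) {n : ℕ} (f : Fin n → V)
    (hadj : ∀ (i : ℕ) (h : i + 1 < n), G.Adj (f ⟨i, by omega⟩) (f ⟨i + 1, h⟩)) :
    ∀ (m k : ℕ) (hk : k < n) (_ : k + m = n - 1), G.Walk (f ⟨k, hk⟩) (f ⟨n - 1, by omega⟩)
  | 0, k, hk, hm =>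
      Walk.nil.copy (congrArg f (Fin.ext (by simp only [Fin.val_mk]; omega))) rfl
  | m + 1, k, hk, hm =>
      Walk.cons (hadj k (by omega)) (chainWalk G f hadj m (k + 1) (by omega) (by omega))

lemma chainWalk_support {V : Type} (G : SimpleGraph V) {n : ℕ} (f : Fin n → V)
    (hadj : ∀ (i : ℕ) (h : i + 1 < n), G.Adj (f ⟨i, by omega⟩) (f ⟨i + 1, h⟩)) :
    ∀ (m k : ℕ) (hk : k < n) (hm : k + m = n - 1) (x : V),
      x ∈ (chainWalk G f hadj m k hk hm).support ↔ ∃ j : Fin n, k ≤ j.val ∧ x = f j := by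
  intro m
  induction m with
  | zero =>
    intro k hk hm x
    simp only [chainWalk, Walk.support_copy, Walk.support_nil, List.mem_singleton]
    constructor
    · rintro rfl
      exact ⟨⟨n - 1, by omega⟩, by simp only [Fin.val_mk]; omega, rfl⟩
    · rintro ⟨j, hj, rfl⟩
      have : j = ⟨n - 1, by omega⟩ := Fin.ext (by simp only [Fin.val_mk]; omega)
      rw [this]
  | succ m ih =>
    intro k hk hm x
    simp only [chainWalk, Walk.support_cons, List.mem_cons]
    rw [ih (k + 1) (by omega) (by omega)]
    constructor
    · rintro (rfl | ⟨j, hj, rfl⟩)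
      · exact ⟨⟨k, hk⟩, le_refl _, rfl⟩
      · exact ⟨j, by omega, rfl⟩
    · rintro ⟨j, hj, rfl⟩
      rcases eq_or_lt_of_le hj with h | h
      · left; congr 1; exact Fin.ext (by simp only [Fin.val_mk]; omega)
      · right; exact ⟨j, by omega, rfl⟩

lemma chainWalk_isPath {V : Type} (G : SimpleGraph V) {n : ℕ} (f : Fin n → V)
    (hinj : Function.Injective f)
    (hadj : ∀ (i : ℕ) (h : i + 1 < n), G.Adj (f ⟨i, by omega⟩) (f ⟨i + 1, h⟩)) :
    ∀ (m k : ℕ) (hk : k < n) (hm : k + m = n - 1),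
      (chainWalk G f hadj m k hk hm).IsPath := by
  intro m
  induction m with
  | zero =>
    intro k hk hm
    simp only [chainWalk]
    rw [Walk.isPath_copy]
    exact Walk.IsPath.nil
  | succ m ih =>
    intro k hk hm
    simp only [chainWalk]
    rw [Walk.cons_isPath_iff]
    refine ⟨ih (k + 1) (by omega) (by omega), ?_⟩
    intro hx
    rw [chainWalk_support] at hx
    obtain ⟨j, hj, hfx⟩ := hx
    have h2 : (⟨k, hk⟩ : Fin n) = j := hinj hfx
    have : k = j.val := by rw [← h2]
    omega

lemma chainWalk_toSubgraph_adj {V : Type} (G : SimpleGraph V) {n : ℕ} (f : Fin n → V)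
    (hadj : ∀ (i : ℕ) (h : i + 1 < n), G.Adj (f ⟨i, by omega⟩) (f ⟨i + 1, h⟩)) :
    ∀ (m k : ℕ) (hk : k < n) (hm : k + m = n - 1) (x y : V),
      (chainWalk G f hadj m k hk hm).toSubgraph.Adj x y ↔
        ∃ (i : ℕ) (h : i + 1 < n), k ≤ i ∧
          s(x, y) = s(f ⟨i, by omega⟩, f ⟨i + 1, h⟩) := by
  intro m
  induction m with
  | zero =>
    intro k hk hm x y
    simp only [chainWalk, toSubgraph_copy]
    constructor
    · intro h; simp [Walk.toSubgraph] at h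
    · rintro ⟨i, h, hi, _⟩; omega
  | succ m ih =>
    intro k hk hm x y
    simp only [chainWalk, Walk.toSubgraph, Subgraph.sup_adj, subgraphOfAdj_adj]
    rw [ih (k + 1) (by omega) (by omega)]
    constructor
    · rintro (h | ⟨i, h, hi, he⟩)
      · exact ⟨k, by omega, le_refl _, h.symm⟩
      · exact ⟨i, h, by omega, he⟩
    · rintro ⟨i, h, hi, he⟩
      rcases eq_or_lt_of_le hi with h' | h'
      · left
        subst h'
        exact he.symm
      · right; exact ⟨i, h, by omega, he⟩

/-- A graph whose vertices are enumerated by `Fin n` with adjacency exactly between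
consecutive indices is a path graph. -/
lemma isPathGraph_of_fin {V : Type} (G : SimpleGraph V) (n : ℕ) (hn : 0 < n)
    (f : Fin n → V) (hinj : Function.Injective f) (hsurj : Function.Surjective f)
    (hadj : ∀ i j : Fin n, G.Adj (f i) (f j) ↔ (i.val + 1 = j.val ∨ j.val + 1 = i.val)) :
    IsPathGraph G := by
  have hadj' : ∀ (i : ℕ) (h : i + 1 < n), G.Adj (f ⟨i, by omega⟩) (f ⟨i + 1, h⟩) := by
    intro i h
    rw [hadj]; left; rfl
  refine ⟨f ⟨0, hn⟩, f ⟨n - 1, by omega⟩,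
    chainWalk G f hadj' (n - 1) 0 hn (by omega),
    chainWalk_isPath G f hinj hadj' (n - 1) 0 hn (by omega), ?_, ?_⟩
  · intro u
    obtain ⟨j, rfl⟩ := hsurj u
    rw [chainWalk_support]
    exact ⟨j, Nat.zero_le _, rfl⟩
  · intro x y
    rw [chainWalk_toSubgraph_adj]
    constructor
    · intro h
      obtain ⟨i, rfl⟩ := hsurj x
      obtain ⟨j, rfl⟩ := hsurj y
      rw [hadj] at h
      rcases h with h | h
      · refine ⟨i.val, by omega, Nat.zero_le _, ?_⟩
        have h1 : (⟨i.val, by omega⟩ : Fin n) = i := Fin.ext rfl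
        have h2 : (⟨i.val + 1, by omega⟩ : Fin n) = j := Fin.ext (by simp only [Fin.val_mk]; omega)
        rw [h1, h2]
      · refine ⟨j.val, by omega, Nat.zero_le _, ?_⟩
        rw [Sym2.eq_swap]
        have h1 : (⟨j.val, by omega⟩ : Fin n) = j := Fin.ext rfl
        have h2 : (⟨j.val + 1, by omega⟩ : Fin n) = i := Fin.ext (by simp only [Fin.val_mk]; omega)
        rw [h1, h2]
    · rintro ⟨i, h, _, he⟩
      have := hadj' i h
      rcases Sym2.eq_iff.mp he with ⟨rfl, rfl⟩ | ⟨rfl, rfl⟩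
      · exact this
      · exact this.symm
/-- The caterpillar graph: spine `Fin (4q-1)` (centres at even positions, connectors at odd
positions) plus pendant leaves at the centres. -/
def catG (p q : ℕ) : SimpleGraph (Fin (4*q-1) ⊕ (Fin (2*q) × Fin (2*p))) :=
  SimpleGraph.fromRel (fun a b => match a, b with
    | Sum.inl a, Sum.inl b => a.val + 1 = b.val
    | Sum.inl a, Sum.inr c => a.val = 2 * c.1.val
    | _, _ => False)

lemma catG_adj_inl_inl {p q : ℕ} (a b : Fin (4*q-1)) :
    (catG p q).Adj (Sum.inl a) (Sum.inl b) ↔ a.val + 1 = b.val ∨ b.val + 1 = a.val := by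
  simp only [catG, fromRel_adj]
  constructor
  · rintro ⟨-, h | h⟩
    · left; exact h
    · right; exact h
  · intro h
    refine ⟨fun hab => ?_, ?_⟩
    · cases Sum.inl.inj hab; omega
    · rcases h with h | h
      · left; exact h
      · right; exact h

lemma catG_adj_inl_inr {p q : ℕ} (a : Fin (4*q-1)) (c : Fin (2*q) × Fin (2*p)) :
    (catG p q).Adj (Sum.inl a) (Sum.inr c) ↔ a.val = 2 * c.1.val := by
  simp only [catG, fromRel_adj]
  constructor
  · rintro ⟨-, h | h⟩
    · exact h
    · exact h.elim
  · intro h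
    exact ⟨fun hab => by simp at hab, Or.inl h⟩

lemma catG_not_adj_inr_inr {p q : ℕ} (c d : Fin (2*q) × Fin (2*p)) :
    ¬ (catG p q).Adj (Sum.inr c) (Sum.inr d) := by
  rintro ⟨-, h | h⟩ <;> exact h

lemma catG_adj_cases {p q : ℕ} {x y : Fin (4*q-1) ⊕ (Fin (2*q) × Fin (2*p))}
    (h : (catG p q).Adj x y) :
    (∃ a b, x = Sum.inl a ∧ y = Sum.inl b ∧ (a.val + 1 = b.val ∨ b.val + 1 = a.val)) ∨
    (∃ a c, x = Sum.inl a ∧ y = Sum.inr c ∧ a.val = 2 * c.1.val) ∨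
    (∃ a c, x = Sum.inr c ∧ y = Sum.inl a ∧ a.val = 2 * c.1.val) := by
  rcases x with a | c <;> rcases y with b | d
  · exact Or.inl ⟨a, b, rfl, rfl, (catG_adj_inl_inl a b).mp h⟩
  · exact Or.inr (Or.inl ⟨a, d, rfl, rfl, (catG_adj_inl_inr a d).mp h⟩)
  · exact Or.inr (Or.inr ⟨b, c, rfl, rfl, (catG_adj_inl_inr b c).mp h.symm⟩)
  · exact absurd h (catG_not_adj_inr_inr c d)

/-- The grading used to show `catG` is a tree. -/
def catρ (p q : ℕ) : Fin (4*q-1) ⊕ (Fin (2*q) × Fin (2*p)) → ℕ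
  | Sum.inl a => a.val
  | Sum.inr c => 2 * c.1.val + 1

lemma catG_leaf_iff {p q : ℕ} (hp : 0 < p) (hq : 0 < q)
    (v : Fin (4*q-1) ⊕ (Fin (2*q) × Fin (2*p))) :
    IsLeaf (catG p q) v ↔ ∃ c, v = Sum.inr c := by
  constructor
  · intro hv
    rcases v with a | c
    · exfalso
      rcases Nat.even_or_odd a.val with ⟨i, hi⟩ | ⟨i, hi⟩
      · have hi2 : i < 2*q := by have := a.isLt; omega
        have h0 : (catG p q).Adj (Sum.inl a) (Sum.inr (⟨i, hi2⟩, ⟨0, by omega⟩)) := by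
          rw [catG_adj_inl_inr]; show a.val = 2 * i; omega
        have h1 : (catG p q).Adj (Sum.inl a) (Sum.inr (⟨i, hi2⟩, ⟨1, by omega⟩)) := by
          rw [catG_adj_inl_inr]; show a.val = 2 * i; omega
        have := hv h0 h1
        simp at this
      · have ha1 : a.val + 1 < 4*q-1 := by
          have := a.isLt
          rcases Nat.lt_or_ge (a.val + 1) (4*q-1) with h | h
          · exact h
          · omega
        have h0 : (catG p q).Adj (Sum.inl a) (Sum.inl ⟨a.val - 1, by omega⟩) := by
          rw [catG_adj_inl_inl]; right; show a.val - 1 + 1 = a.val; omega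
        have h1 : (catG p q).Adj (Sum.inl a) (Sum.inl ⟨a.val + 1, ha1⟩) := by
          rw [catG_adj_inl_inl]; left; rfl
        have := hv h0 h1
        simp only [Sum.inl.injEq, Fin.mk.injEq] at this
        omega
    · exact ⟨c, rfl⟩
  · rintro ⟨c, rfl⟩
    intro x hx y hy
    have key : ∀ z, (catG p q).Adj (Sum.inr c) z →
        z = Sum.inl ⟨2*c.1.val, by have := c.1.isLt; omega⟩ := by
      rintro (a | d) hz
      · exact congrArg Sum.inl (Fin.ext ((catG_adj_inl_inr a c).mp hz.symm))
      · exact absurd hz (catG_not_adj_inr_inr c d)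
    rw [key x hx, key y hy]

def catF (p q : ℕ) : Fin (2*q) × Option (Fin (2*p)) → Fin (4*q-1) ⊕ (Fin (2*q) × Fin (2*p))
  | (i, none) => Sum.inl ⟨2*i.val, by have := i.isLt; omega⟩
  | (i, some j) => Sum.inr (i, j)

/-- a forest of `2q` stars, each with `2p` leaves, is an induced subgraph of a
caterpillar with `4pq + 4q − 1` vertices and `4pq` leaves. -/
theorem starForest_in_caterpillar (p q : ℕ) (hp : 0 < p) (hq : 0 < q) :
    ∃ (U : Type) (_ : Fintype U) (T : SimpleGraph U),
      IsCaterpillar T ∧ Nat.card U = 4 * p * q + 4 * q - 1 ∧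
      {v : U | IsLeaf T v}.ncard = 4 * p * q ∧
      Nonempty (starForest (2 * q) (2 * p) ↪g T) := by
  refine ⟨Fin (4*q-1) ⊕ (Fin (2*q) × Fin (2*p)), inferInstance, catG p q, ⟨?_, ?_⟩, ?_, ?_, ?_⟩
  -- tree
  · constructor
    · refine connected_of_grading _ (catρ p q) (Sum.inl ⟨0, by omega⟩) ?_
      rintro (a | c) hv
      · refine ⟨Sum.inl ⟨a.val - 1, by have := a.isLt; omega⟩, ?_, ?_⟩
        · rw [catG_adj_inl_inl]; right
          show a.val - 1 + 1 = a.val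
          have : a.val ≠ 0 := fun h => hv (congrArg Sum.inl (Fin.ext h))
          omega
        · show a.val - 1 < a.val
          have : a.val ≠ 0 := fun h => hv (congrArg Sum.inl (Fin.ext h))
          omega
      · refine ⟨Sum.inl ⟨2*c.1.val, by have := c.1.isLt; omega⟩, ?_, ?_⟩
        · exact ((catG_adj_inl_inr _ c).mpr rfl).symm
        · show 2*c.1.val < 2*c.1.val + 1
          omega
    · refine acyclic_of_grading _ (catρ p q) ?_ ?_
      · intro v w h
        rcases catG_adj_cases h with ⟨a, b, rfl, rfl, hab⟩ | ⟨a, c, rfl, rfl, hac⟩ |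
          ⟨a, c, rfl, rfl, hac⟩
        · exact hab
        · left; show a.val + 1 = 2*c.1.val + 1; omega
        · right; show a.val + 1 = 2*c.1.val + 1; omega
      · intro v w w' h1 h2 hw hw'
        have key : ∀ z, (catG p q).Adj v z → catρ p q z + 1 = catρ p q v →
            (∃ a, v = Sum.inl a ∧ z = Sum.inl ⟨a.val - 1, by have := a.isLt; omega⟩ ∧ 1 ≤ a.val) ∨
            (∃ c, v = Sum.inr c ∧ z = Sum.inl ⟨2*c.1.val, by have := c.1.isLt; omega⟩) := by
          intro z hz hρ
          rcases catG_adj_cases hz with ⟨a, b, rfl, rfl, hab⟩ | ⟨a, c, rfl, rfl, hac⟩ |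
            ⟨a, c, rfl, rfl, hac⟩
          · left
            refine ⟨a, rfl, ?_, ?_⟩
            · have hb : b.val + 1 = a.val := by
                simp only [catρ] at hρ; omega
              exact congrArg Sum.inl (Fin.ext (by show b.val = a.val - 1; omega))
            · simp only [catρ] at hρ; omega
          · exfalso; simp only [catρ] at hρ; omega
          · right
            exact ⟨c, rfl, congrArg Sum.inl (Fin.ext (by show a.val = 2*c.1.val; omega))⟩
        rcases key w h1 hw with ⟨a, hva, hwa, -⟩ | ⟨c, hvc, hwc⟩ <;>
          rcases key w' h2 hw' with ⟨a', hva', hwa', -⟩ | ⟨c', hvc', hwc'⟩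
        · rw [hva] at hva'
          cases Sum.inl.inj hva'
          rw [hwa, hwa']
        · rw [hva] at hvc'; simp at hvc'
        · rw [hvc] at hva'; simp at hva'
        · rw [hvc] at hvc'
          cases Sum.inr.inj hvc'
          rw [hwc, hwc']
  -- caterpillar path
  · have hSmem : ∀ a : Fin (4*q-1), Sum.inl a ∈ {v | ¬ IsLeaf (catG p q) v} := by
      intro a
      simp only [Set.mem_setOf_eq, catG_leaf_iff hp hq]
      rintro ⟨c, hc⟩
      simp at hc
    refine isPathGraph_of_fin _ (4*q-1) (by omega)
      (fun k => ⟨Sum.inl k, hSmem k⟩) ?_ ?_ ?_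
    · intro i j hij
      exact Sum.inl_injective (congrArg Subtype.val hij)
    · rintro ⟨v, hv⟩
      rcases v with a | c
      · exact ⟨a, rfl⟩
      · exact absurd ((catG_leaf_iff hp hq _).mpr ⟨c, rfl⟩) hv
    · intro i j
      exact catG_adj_inl_inl i j
  -- card
  · have h4 : 2*q*(2*p) = 4*p*q := by ring
    simp only [Nat.card_eq_fintype_card, Fintype.card_sum, Fintype.card_prod, Fintype.card_fin]
    omega
  -- leaves
  · have hset : {v : Fin (4*q-1) ⊕ (Fin (2*q) × Fin (2*p)) | IsLeaf (catG p q) v} =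
        Set.range Sum.inr := by
      ext v
      simp only [Set.mem_setOf_eq, catG_leaf_iff hp hq, Set.mem_range]
      exact ⟨fun ⟨c, h⟩ => ⟨c, h.symm⟩, fun ⟨c, h⟩ => ⟨c, h.symm⟩⟩
    rw [hset, ← Nat.card_coe_set_eq, Nat.card_range_of_injective Sum.inr_injective]
    have h4 : 2*q*(2*p) = 4*p*q := by ring
    simp only [Nat.card_eq_fintype_card, Fintype.card_prod, Fintype.card_fin]
    omega
  -- embedding
  · classical
    refine ⟨⟨⟨catF p q, ?_⟩, ?_⟩⟩
    · rintro ⟨i, _ | j⟩ ⟨i', _ | j'⟩ h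
      · simp only [catF, Sum.inl.injEq, Fin.mk.injEq] at h
        have : i = i' := Fin.ext (by omega)
        rw [this]
      · exact absurd h (by simp [catF])
      · exact absurd h (by simp [catF])
      · simp only [catF, Sum.inr.injEq, Prod.mk.injEq] at h
        rw [h.1, h.2]
    · rintro ⟨i, _ | j⟩ ⟨i', _ | j'⟩
      · show (catG p q).Adj (Sum.inl _) (Sum.inl _) ↔ _
        rw [catG_adj_inl_inl]
        constructor
        · intro h
          exfalso
          have h' : 2*i.val + 1 = 2*i'.val ∨ 2*i'.val + 1 = 2*i.val := h
          omega
        · intro h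
          exfalso
          simp only [starForest, fromRel_adj] at h
          rcases h with ⟨-, ⟨-, -, hne⟩ | ⟨-, -, hne⟩⟩ <;> exact hne rfl
      · show (catG p q).Adj (Sum.inl _) (Sum.inr _) ↔ _
        rw [catG_adj_inl_inr]
        constructor
        · intro h
          have h' : 2*i.val = 2*i'.val := h
          have hii : i = i' := Fin.ext (by omega)
          subst hii
          simp only [starForest, fromRel_adj]
          exact ⟨by simp, Or.inl (by simp)⟩
        · intro h
          simp only [starForest, fromRel_adj] at h
          rcases h with ⟨-, ⟨hii, -, -⟩ | ⟨-, hcon, -⟩⟩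
          · show 2*i.val = 2*i'.val
            rw [show i = i' from hii]
          · exact absurd hcon (by simp)
      · show (catG p q).Adj (Sum.inr _) (Sum.inl _) ↔ _
        rw [adj_comm, catG_adj_inl_inr]
        constructor
        · intro h
          have h' : 2*i'.val = 2*i.val := h
          have hii : i' = i := Fin.ext (by omega)
          subst hii
          simp only [starForest, fromRel_adj]
          exact ⟨by simp, Or.inr (by simp)⟩
        · intro h
          simp only [starForest, fromRel_adj] at h
          rcases h with ⟨-, ⟨-, hcon, -⟩ | ⟨hii, -, -⟩⟩
          · exact absurd hcon (by simp)
          · show 2*i'.val = 2*i.val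
            rw [show i' = i from hii]
      · show (catG p q).Adj (Sum.inr _) (Sum.inr _) ↔ _
        constructor
        · intro h
          exact absurd h (catG_not_adj_inr_inr _ _)
        · intro h
          exfalso
          simp only [starForest, fromRel_adj] at h
          rcases h with ⟨-, ⟨-, hn, -⟩ | ⟨-, hn, -⟩⟩ <;> simp at hn
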